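/- Let j, k ∈ S with k ≠ j, let x₀ = (u₀, j, j, v₀, k, j) be a finite string over S (u₀, v₀ possibly empty), and let 𝒞 = { x ⪯ x₀ : x = (u, j, j, v, k, j) for some (possibly empty) strings u, v }. Then 𝒞 has a minimal element x*, and x* can be taken of the form x* = (j, j, v*, k, j) with j ∉ {v*}. -/

import Mathlib

/-!
STATEMENT 6 (Lemma `ii`): the class `𝒞` of strings of the form `(u,j,j,v,k,j)`
that are shorter than `x₀ = (u₀,j,j,v₀,k,j)` has a minimal element of the form
`(j,j,v*,k,j)` with `j ∉ {v*}`.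
-/

variable {S : Type*} [DecidableEq S]

/-- The number of transitions from `i` to `j` in the finite string `z`. -/
def transCount (z : List S) (i j : S) : ℕ :=
  (z.zip z.tail).countP (fun q => decide (q = (i, j)))

/-- Two finite strings are equivalent if they have the same first element and the
same transition counts between any two states. -/
def StringEquiv (z z' : List S) : Prop :=
  z.head? = z'.head? ∧ ∀ i j : S, transCount z i j = transCount z' i j

/-- `z ⪯ z'` : there is a (possibly empty) string `x` with `(x, z) ∼ z'`. -/
def Shorter (z z' : List S) : Prop :=
  ∃ x : List S, StringEquiv (x ++ z) z'

/-- `z ≺ z'` : there is a nonempty string `x` with `(x, z) ∼ z'`. -/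
def StrictShorter (z z' : List S) : Prop :=
  ∃ x : List S, x ≠ [] ∧ StringEquiv (x ++ z) z'

/-- `z*` is minimal in the class `𝒞`. -/
def MinimalIn (𝒞 : Set (List S)) (zstar : List S) : Prop :=
  zstar ∈ 𝒞 ∧ ∀ z ∈ 𝒞, ¬ StrictShorter z zstar

set_option linter.unusedSectionVars false

lemma zip_tail_append (x : List S) (b : S) (z : List S) :
    (x ++ b :: z).zip (x ++ b :: z).tail
      = x.zip (x.tail ++ [b]) ++ (b :: z).zip z := by
  induction x with
  | nil => simp
  | cons a t ih =>
      cases t with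
      | nil => simp
      | cons c t' =>
          simp only [List.cons_append, List.tail_cons, List.zip_cons_cons] at ih ⊢
          rw [ih]

lemma transCount_append (x : List S) (b : S) (z : List S) (i j : S) :
    transCount (x ++ b :: z) i j
      = (x.zip (x.tail ++ [b])).countP (fun q => decide (q = (i, j)))
        + transCount (b :: z) i j := by
  unfold transCount
  rw [zip_tail_append, List.countP_append]
  rfl

lemma StringEquiv.refl' (z : List S) : StringEquiv z z := ⟨rfl, fun _ _ => rfl⟩

lemma StringEquiv.trans' {a b c : List S} (h1 : StringEquiv a b) (h2 : StringEquiv b c) :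
    StringEquiv a c :=
  ⟨h1.1.trans h2.1, fun i j => (h1.2 i j).trans (h2.2 i j)⟩

lemma StringEquiv.append_left {w z : List S} (x : List S) (h : StringEquiv w z) :
    StringEquiv (x ++ w) (x ++ z) := by
  obtain ⟨h1, h2⟩ := h
  cases w with
  | nil =>
      have hz : z = [] := by
        simpa [List.head?_eq_none_iff] using h1.symm
      subst hz; exact StringEquiv.refl' _
  | cons b w' =>
      cases z with
      | nil => simp at h1
      | cons c z' =>
          have hbc : b = c := by simpa using h1
          subst hbc
          refine ⟨?_, ?_⟩
          · cases x <;> simp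
          · intro i j
            rw [transCount_append, transCount_append, h2]

lemma transCount_eq_count (z : List S) (i j : S) :
    transCount z i j = @List.count (S × S) instBEqOfDecidableEq (i, j) (z.zip z.tail) := by
  unfold transCount List.count
  rfl

lemma StringEquiv.length_eq {a b : List S} (h : StringEquiv a b) : a.length = b.length := by
  cases a with
  | nil =>
      have : b = [] := by simpa [List.head?_eq_none_iff] using h.1.symm
      simp [this]
  | cons a0 a' =>
      cases b with
      | nil => exact absurd h.1 (by simp)
      | cons b0 b' =>
          have hp : ((a0 :: a').zip a').Perm ((b0 :: b').zip b') := by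
            rw [List.perm_iff_count]
            intro p
            have := h.2 p.1 p.2
            rw [transCount_eq_count, transCount_eq_count] at this
            rw [lawful_beq_subsingleton (instBEqProd : BEq (S × S)) instBEqOfDecidableEq]
            simpa using this
          have hl := hp.length_eq
          rw [List.length_zip, List.length_zip] at hl
          simp only [List.length_cons] at hl ⊢
          omega

lemma Shorter.refl' (z : List S) : Shorter z z := ⟨[], StringEquiv.refl' z⟩

lemma Shorter.trans' {a b c : List S} (h1 : Shorter a b) (h2 : Shorter b c) : Shorter a c := by
  obtain ⟨x, hx⟩ := h1
  obtain ⟨y, hy⟩ := h2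
  exact ⟨y ++ x, by rw [List.append_assoc]; exact (hx.append_left y).trans' hy⟩

lemma shorter_of_suffix (u t : List S) : Shorter t (u ++ t) := ⟨u, StringEquiv.refl' _⟩

lemma StrictShorter.length_lt {w z : List S} (h : StrictShorter w z) : w.length < z.length := by
  obtain ⟨x, hx, he⟩ := h
  have := he.length_eq
  rw [List.length_append] at this
  have : x.length ≠ 0 := by simpa using hx
  omega

lemma StrictShorter.shorter {w z : List S} (h : StrictShorter w z) : Shorter w z :=
  ⟨h.choose, h.choose_spec.2⟩

lemma rotate (a : S) (m r : List S) :
    StringEquiv ((a :: m) ++ a :: a :: r) ((a :: a :: m) ++ a :: r) := by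
  refine ⟨by simp, fun i j => ?_⟩
  unfold transCount
  have h1 := zip_tail_append (a :: m) a (a :: r) (S := S)
  have h2 := zip_tail_append (a :: a :: m) a r (S := S)
  simp only [List.cons_append, List.tail_cons] at h1 h2 ⊢
  rw [h1, h2]
  simp only [List.zip_cons_cons, List.countP_append, List.countP_cons]
  omega


theorem exists_minimal_jj_aux (j k : S) (u₀ v₀ : List S) :
    ∃ vstar : List S, j ∉ vstar ∧
      (([j, j] ++ vstar ++ [k, j]) ∈
        {x | Shorter x (u₀ ++ [j, j] ++ v₀ ++ [k, j]) ∧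
          ∃ u v : List S, x = u ++ [j, j] ++ v ++ [k, j]} ∧
        ∀ z ∈ {x | Shorter x (u₀ ++ [j, j] ++ v₀ ++ [k, j]) ∧
          ∃ u v : List S, x = u ++ [j, j] ++ v ++ [k, j]},
          ¬ StrictShorter z ([j, j] ++ vstar ++ [k, j])) := by
  set x₀ : List S := u₀ ++ [j, j] ++ v₀ ++ [k, j] with hx₀
  set C : Set (List S) :=
    {x | Shorter x x₀ ∧ ∃ u v : List S, x = u ++ [j, j] ++ v ++ [k, j]} with hC
  have hC0 : x₀ ∈ C := ⟨Shorter.refl' _, u₀, v₀, rfl⟩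
  obtain ⟨n, hn, hminn⟩ := (Nat.lt_wfRel.wf).has_min (List.length '' C)
    ⟨x₀.length, Set.mem_image_of_mem _ hC0⟩
  obtain ⟨z, hzC, rfl⟩ := hn
  have hzmin : ∀ w ∈ C, z.length ≤ w.length := fun w hw =>
    Nat.le_of_not_lt (hminn _ (Set.mem_image_of_mem _ hw))
  obtain ⟨hzsh, u, v, hzuv⟩ := hzC
  set z₁ : List S := [j, j] ++ v ++ [k, j] with hz₁
  have hz₁sh : Shorter z₁ z := by
    rw [hzuv]
    have : u ++ [j, j] ++ v ++ [k, j] = u ++ z₁ := by simp [hz₁]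
    rw [this]
    exact shorter_of_suffix u z₁
  have hz₁C : z₁ ∈ C := ⟨hz₁sh.trans' hzsh, [], v, by simp [hz₁]⟩
  have hz₁min : ∀ w ∈ C, z₁.length ≤ w.length := by
    intro w hw
    have h1 : z₁.length ≤ z.length := by
      rw [hzuv]; simp [hz₁]
    exact le_trans h1 (hzmin w hw)
  have hjv : j ∉ v := by
    intro hmem
    obtain ⟨v₁, v₂, hv⟩ := List.append_of_mem hmem
    set z₂ : List S := [j, j] ++ v₂ ++ [k, j] with hz₂
    have hrot : StringEquiv ((j :: v₁) ++ z₂) z₁ := by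
      have := rotate j v₁ (v₂ ++ [k, j])
      have e1 : (j :: v₁) ++ j :: j :: (v₂ ++ [k, j]) = (j :: v₁) ++ z₂ := by
        simp [hz₂]
      have e2 : (j :: j :: v₁) ++ j :: (v₂ ++ [k, j]) = z₁ := by
        simp [hz₁, hv]
      rwa [e1, e2] at this
    have hz₂C : z₂ ∈ C := by
      refine ⟨Shorter.trans' ⟨j :: v₁, hrot⟩ (hz₁sh.trans' hzsh), [], v₂, by simp [hz₂]⟩
    have hlt : z₂.length < z₁.length := StrictShorter.length_lt ⟨j :: v₁, by simp, hrot⟩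
    exact absurd (hz₁min z₂ hz₂C) (by omega)
  refine ⟨v, hjv, ?_, ?_⟩
  · simpa [hz₁] using hz₁C
  · intro w hw hss
    have h1 : z₁.length ≤ w.length := hz₁min w hw
    have h2 : w.length < z₁.length := by
      have := hss.length_lt
      simpa [hz₁] using this
    omega

theorem exists_minimal_jj (j k : S) (hkj : k ≠ j) (u₀ v₀ : List S) :
    ∃ vstar : List S, j ∉ vstar ∧
      MinimalIn
        {x | Shorter x (u₀ ++ [j, j] ++ v₀ ++ [k, j]) ∧
          ∃ u v : List S, x = u ++ [j, j] ++ v ++ [k, j]}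
        ([j, j] ++ vstar ++ [k, j]) := by
  obtain ⟨v, h1, h2, h3⟩ := exists_minimal_jj_aux j k u₀ v₀
  exact ⟨v, h1, h2, h3⟩
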